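/- arXiv:2603.15063 — 2 statements merged into one kernel-verified Lean document; each statement's English description precedes it below -/
import Mathlib

section
/- Let Â ∈ ℝ^{n×n}, Δ_K ∈ ℝ^{n×n} with Δ_K ≥ 0, Δ_S ∈ ℝ^{n×p} with Δ_S ≥ 0, and define F_0 = Δ_S and F_{j+1} = Δ_K Σ_{i=0}^{j} |Â^{j−i}| F_i for j ≥ 0. Let ℐ_A = Â ⊕ [±Δ_K] and let ℐ_Δ = ⟨0; E(Δ_S)⟩. Then for every j ≥ 0, the j-fold iterate 𝕋_{ℐ_A}^j(ℐ_Δ) equals, as a set, the matrix zonotope with center 0 and generator family { Â^{j−h} F_h^{(k)} : h = 0,…,j, k = 1,…,np }, where (F_h^{(k)})_k = E(F_h). -/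
open Matrix Finset Pointwise

noncomputable section

/-- entrywise absolute value of a real matrix -/
def matAbs {ι κ : Type*} (M : Matrix ι κ ℝ) : Matrix ι κ ℝ := fun i j => |M i j|

/-- interval matrix `C ⊕ [±Δ] = {C + D : |D| ≤ Δ}` -/
def intervalMat {ι κ : Type*} (C Δ : Matrix ι κ ℝ) : Set (Matrix ι κ ℝ) :=
  {X | ∀ i j, |X i j - C i j| ≤ Δ i j}

/-- representation of a matrix zonotope: a center and a list of generators -/
structure ZRep (ι κ : Type*) where
  c : Matrix ι κ ℝ
  g : List (Matrix ι κ ℝ)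

/-- the set of matrices described by a matrix zonotope representation -/
def ZRep.set {ι κ : Type*} (Z : ZRep ι κ) : Set (Matrix ι κ ℝ) :=
  {X | ∃ β : Fin Z.g.length → ℝ, (∀ i, |β i| ≤ 1) ∧ X = Z.c + ∑ i, β i • Z.g.get i}

/-- interval hull `box(⟨M;G⟩) = M ⊕ [± Σ |G_i|]` of a matrix zonotope -/
def ZRep.box {ι κ : Type*} (Z : ZRep ι κ) : Set (Matrix ι κ ℝ) :=
  intervalMat Z.c ((Z.g.map matAbs).sum)

/-- the family `E(F)` of single-entry matrices, as a list -/
def EList {ι κ : Type*} [Fintype ι] [Fintype κ] [DecidableEq ι] [DecidableEq κ]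
    (F : Matrix ι κ ℝ) : List (Matrix ι κ ℝ) :=
  (Finset.univ : Finset (ι × κ)).toList.map fun p => Matrix.single p.1 p.2 (F p.1 p.2)

/-- the operator `𝕋_ℐ` (for `ℐ = C ⊕ [±Δ]`) acting on zonotope representations:
`𝕋_ℐ(⟨M;G₁,…,G_g⟩) = ⟨CM; CG₁,…,CG_g, E(Δ(|M|+Σ|G_i|))⟩` -/
def Tstep {ι κ μ : Type*} [Fintype ι] [Fintype κ] [Fintype μ] [DecidableEq ι] [DecidableEq μ]
    (C Δ : Matrix ι κ ℝ) (Z : ZRep κ μ) : ZRep ι μ :=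
  ⟨C * Z.c, Z.g.map (fun G => C * G) ++ EList (Δ * (matAbs Z.c + (Z.g.map matAbs).sum))⟩


lemma matAbs_zero' {ι κ : Type*} : matAbs (0 : Matrix ι κ ℝ) = 0 := by
  funext i j; simp [matAbs]

lemma matAbs_mul_stdBasis' {ι κ μ : Type*} [Fintype κ] [DecidableEq κ] [DecidableEq μ]
    (A : Matrix ι κ ℝ) (a : κ) (b : μ) {c : ℝ} (hc : 0 ≤ c) :
    matAbs (A * Matrix.single a b c) = matAbs A * Matrix.single a b c := by
  funext i j
  simp only [matAbs, Matrix.mul_apply, Matrix.single, Matrix.of_apply]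
  by_cases hj : b = j
  · simp only [hj, and_true, mul_ite, mul_zero, Finset.sum_ite_eq, Finset.mem_univ, if_true]
    rw [abs_mul, abs_of_nonneg hc]
  · simp [hj]

lemma EList_sum' {ι κ : Type*} [Fintype ι] [Fintype κ] [DecidableEq ι] [DecidableEq κ]
    (M : Matrix ι κ ℝ) : (EList M).sum = M := by
  rw [EList, Finset.sum_map_toList, ← Finset.univ_product_univ, Finset.sum_product]
  exact (Matrix.matrix_eq_sum_single M).symm

lemma list_sum_map_mul' {ι κ μ : Type*} [Fintype κ] (A : Matrix ι κ ℝ)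
    (l : List (Matrix κ μ ℝ)) : (l.map (fun G => A * G)).sum = A * l.sum := by
  induction l with
  | nil => simp
  | cons x xs ih => simp [ih, Matrix.mul_add]

lemma list_sum_flatMap' {α β : Type*} [AddCommMonoid β] (l : List α) (f : α → List β) :
    (l.flatMap f).sum = (l.map fun a => (f a).sum).sum := by
  induction l with
  | nil => simp
  | cons x xs ih => simp [List.flatMap_cons, ih]

lemma list_sum_range' {β : Type*} [AddCommMonoid β] (m : ℕ) (g : ℕ → β) :
    ((List.range m).map g).sum = ∑ h ∈ Finset.range m, g h := by
  induction m with
  | zero => simp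
  | succ m ih => rw [List.range_succ, Finset.sum_range_succ]; simp [ih]

/-- the `j`-fold iterate `𝕋_{ℐ_A}^j(ℐ_Δ)` equals, as a set, the matrix
zonotope with center `0` and generators `Â^{j−h} F_h^{(k)}`, `h = 0,…,j`, `(F_h^{(k)})_k = E(F_h)`. -/
theorem stmt4 {n p : ℕ} (Ahat ΔK : Matrix (Fin n) (Fin n) ℝ)
    (ΔS : Matrix (Fin n) (Fin p) ℝ) (hΔK : ∀ i j, 0 ≤ ΔK i j) (hΔS : ∀ i j, 0 ≤ ΔS i j)
    (F : ℕ → Matrix (Fin n) (Fin p) ℝ) (hF0 : F 0 = ΔS)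
    (hF : ∀ j, F (j + 1) = ΔK * ∑ i ∈ Finset.range (j + 1), matAbs (Ahat ^ (j - i)) * F i) :
    ∀ j : ℕ, ((Tstep Ahat ΔK)^[j] ⟨0, EList ΔS⟩).set =
      (ZRep.mk 0 ((List.range (j + 1)).flatMap fun h =>
        (EList (F h)).map fun X => Ahat ^ (j - h) * X)).set := by

  have hFnn : ∀ h i k, 0 ≤ F h i k := by
    intro h
    induction h using Nat.strong_induction_on with
    | _ h ih =>
      match h with
      | 0 => intro i k; rw [hF0]; exact hΔS i k
      | j + 1 =>
        intro i k
        rw [hF j, Matrix.mul_apply]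
        refine Finset.sum_nonneg fun b _ => mul_nonneg (hΔK _ _) ?_
        rw [Matrix.sum_apply]
        refine Finset.sum_nonneg fun a ha => ?_
        rw [Matrix.mul_apply]
        refine Finset.sum_nonneg fun c _ => mul_nonneg (abs_nonneg _) ?_
        exact ih a (Finset.mem_range.mp ha) _ _
  -- absolute-value sum of a scaled EList
  have habsum : ∀ (A : Matrix (Fin n) (Fin n) ℝ) (h : ℕ),
      (((EList (F h)).map fun X => A * X).map matAbs).sum = matAbs A * F h := by
    intro A h
    have : ((EList (F h)).map fun X => A * X).map matAbs
        = (EList (F h)).map fun X => matAbs A * X := by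
      rw [EList, List.map_map, List.map_map, List.map_map]
      refine List.map_congr_left fun q _ => ?_
      exact matAbs_mul_stdBasis' A q.1 q.2 (hFnn h q.1 q.2)
    rw [this, list_sum_map_mul', EList_sum']
  have key : ∀ j, (Tstep Ahat ΔK)^[j] (⟨0, EList ΔS⟩ : ZRep (Fin n) (Fin p))
      = ⟨0, (List.range (j + 1)).flatMap fun h =>
          (EList (F h)).map fun X => Ahat ^ (j - h) * X⟩ := by
    intro j
    induction j with
    | zero =>
      simp [hF0, List.range_succ]
    | succ j ih =>
      rw [Function.iterate_succ_apply', ih, Tstep]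
      simp only [Matrix.mul_zero, matAbs_zero', zero_add]
      have hsum : ((((List.range (j + 1)).flatMap fun h =>
            (EList (F h)).map fun X => Ahat ^ (j - h) * X)).map matAbs).sum
          = ∑ h ∈ Finset.range (j + 1), matAbs (Ahat ^ (j - h)) * F h := by
        rw [List.map_flatMap, list_sum_flatMap', list_sum_range']
        exact Finset.sum_congr rfl fun h _ => habsum _ h
      congr 1
      rw [hsum, ← hF j,
        show List.range (j + 1 + 1) = List.range (j + 1) ++ [j + 1] from List.range_succ (n := _),
        List.flatMap_append, List.flatMap_singleton]
      congr 1
      · rw [List.map_flatMap]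
        refine List.flatMap_congr fun h hh => ?_
        rw [List.map_map]
        refine List.map_congr_left fun X _ => ?_
        have hle : h ≤ j := Nat.lt_succ_iff.mp (List.mem_range.mp hh)
        show Ahat * (Ahat ^ (j - h) * X) = Ahat ^ (j + 1 - h) * X
        rw [Nat.succ_sub hle, pow_succ', Matrix.mul_assoc]
      · simp
  intro j
  rw [key j]
end
end

section
/- Recursive feasibility (Theorem 1): in the setting of the feasibility problem below, suppose (N, z(·), v(·)) with N ≥ 1 is feasible at x ∈ ℝ^n. Then for every A ∈ ℝ^{n×n}, B ∈ ℝ^{n×m} with |[A B] − [Â B̂]| ≤ Δ_S entrywise and every w ∈ 𝒲, setting x⁺ = Ax + Bv(0) + w, there exist N⁺ ≥ 1 and sequences (z⁺(·), v⁺(·)) feasible at x⁺. -/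
open Matrix Finset Pointwise

noncomputable section

/-- a vector of `ℝ^n` viewed as a column matrix -/
def colVec {n : ℕ} (w : Fin n → ℝ) : Matrix (Fin n) (Fin 1) ℝ := fun i _ => w i

/-- the set `𝒜_K = {Â_K + D[Iₙ; K] : |D| ≤ Δ_S}` -/
def AKset {n m : ℕ} (AhK : Matrix (Fin n) (Fin n) ℝ) (K : Matrix (Fin m) (Fin n) ℝ)
    (ΔS : Matrix (Fin n) (Fin n ⊕ Fin m) ℝ) : Set (Matrix (Fin n) (Fin n) ℝ) :=
  {X | ∃ D ∈ intervalMat 0 ΔS, X = AhK + D * Matrix.fromRows 1 K}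

/-- `ℐ^Δ(j) = [± Σ_{i=0}^{j} |Â_K^{j−i}| F_i]` -/
def IDelta {n m : ℕ} (AhK : Matrix (Fin n) (Fin n) ℝ)
    (FΔ : ℕ → Matrix (Fin n) (Fin n ⊕ Fin m) ℝ) (j : ℕ) :
    Set (Matrix (Fin n) (Fin n ⊕ Fin m) ℝ) :=
  intervalMat 0 (∑ i ∈ Finset.range (j + 1), matAbs (AhK ^ (j - i)) * FΔ i)

/-- `ℐ^𝒲(j) = [± Σ_{i=0}^{j} |Â_K^{j−i}| F^𝒲_i]`, a set of (column) vectors of `ℝ^n` -/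
def IWvec {n : ℕ} (AhK : Matrix (Fin n) (Fin n) ℝ)
    (FW : ℕ → Matrix (Fin n) (Fin 1) ℝ) (j : ℕ) : Set (Matrix (Fin n) (Fin 1) ℝ) :=
  intervalMat 0 (∑ i ∈ Finset.range (j + 1), matAbs (AhK ^ (j - i)) * FW i)

/-- the tube `ℬ(j) = Σ_{i<j} ℐ^Δ(j−i−1)[z(i); v(i)] ⊕ Σ_{i<j} ℐ^𝒲(i)` -/
def Btube {n m : ℕ} (AhK : Matrix (Fin n) (Fin n) ℝ)
    (FΔ : ℕ → Matrix (Fin n) (Fin n ⊕ Fin m) ℝ) (FW : ℕ → Matrix (Fin n) (Fin 1) ℝ)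
    (z : ℕ → Matrix (Fin n) (Fin 1) ℝ) (v : ℕ → Matrix (Fin m) (Fin 1) ℝ) (j : ℕ) :
    Set (Matrix (Fin n) (Fin 1) ℝ) :=
  (∑ i ∈ Finset.range j,
    (fun D => D * Matrix.fromRows (z i) (v i)) '' IDelta AhK FΔ (j - i - 1)) +
  ∑ i ∈ Finset.range j, IWvec AhK FW i

/-- feasibility of `(N, z(·), v(·))` at `x` for the variable-horizon robust control problem -/
def Feasible {n m : ℕ} (Ah : Matrix (Fin n) (Fin n) ℝ) (Bh : Matrix (Fin n) (Fin m) ℝ)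
    (K : Matrix (Fin m) (Fin n) ℝ)
    (FΔ : ℕ → Matrix (Fin n) (Fin n ⊕ Fin m) ℝ) (FW : ℕ → Matrix (Fin n) (Fin 1) ℝ)
    (X : Set (Matrix (Fin n) (Fin 1) ℝ)) (U : Set (Matrix (Fin m) (Fin 1) ℝ))
    (Xf : Set (Matrix (Fin n) (Fin 1) ℝ)) (x : Matrix (Fin n) (Fin 1) ℝ) (N : ℕ)
    (z : ℕ → Matrix (Fin n) (Fin 1) ℝ) (v : ℕ → Matrix (Fin m) (Fin 1) ℝ) : Prop :=
  1 ≤ N ∧ z 0 = x ∧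
  (∀ j < N, z (j + 1) = Ah * z j + Bh * v j) ∧
  (∀ j ≤ N, {z j} + Btube (Ah + Bh * K) FΔ FW z v j ⊆ X) ∧
  (∀ j < N, {v j} + (fun e => K * e) '' Btube (Ah + Bh * K) FΔ FW z v j ⊆ U) ∧
  {z N} + Btube (Ah + Bh * K) FΔ FW z v N ⊆ Xf

section Aux

variable {n m : ℕ}

lemma matAbs_nonneg {ι κ : Type*} (M : Matrix ι κ ℝ) (i : ι) (j : κ) : 0 ≤ matAbs M i j :=
  abs_nonneg _

lemma entry_mul_nonneg {ι κ μ : Type*} [Fintype κ] {P : Matrix ι κ ℝ} {Q : Matrix κ μ ℝ}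
    (hP : ∀ i j, 0 ≤ P i j) (hQ : ∀ i j, 0 ≤ Q i j) (i : ι) (j : μ) : 0 ≤ (P * Q) i j := by
  rw [Matrix.mul_apply]
  exact Finset.sum_nonneg fun k _ => mul_nonneg (hP i k) (hQ k j)

lemma entry_mul_mono {ι κ μ : Type*} [Fintype κ] {P : Matrix ι κ ℝ} {Q Q' : Matrix κ μ ℝ}
    (hP : ∀ i j, 0 ≤ P i j) (h : ∀ i j, Q i j ≤ Q' i j) (i : ι) (j : μ) :
    (P * Q) i j ≤ (P * Q') i j := by
  rw [Matrix.mul_apply, Matrix.mul_apply]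
  exact Finset.sum_le_sum fun k _ => mul_le_mul_of_nonneg_left (h k j) (hP i k)

lemma entry_abs_mul {ι κ μ : Type*} [Fintype κ] (P : Matrix ι κ ℝ) (Q : Matrix κ μ ℝ)
    (i : ι) (j : μ) : |(P * Q) i j| ≤ (matAbs P * matAbs Q) i j := by
  rw [Matrix.mul_apply, Matrix.mul_apply]
  refine (Finset.abs_sum_le_sum_abs _ _).trans (Finset.sum_le_sum fun k _ => ?_)
  exact le_of_eq (abs_mul _ _)

lemma matAbs_one' : matAbs (1 : Matrix (Fin n) (Fin n) ℝ) = 1 := by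
  ext i j
  by_cases h : i = j <;> simp [matAbs, Matrix.one_apply, h]

/-- boxes of column vectors -/
def boxV {ι : Type*} (r : Matrix ι (Fin 1) ℝ) : Set (Matrix ι (Fin 1) ℝ) :=
  {y | ∀ i j, |y i j| ≤ r i j}

lemma interval_zero_eq_boxV {ι : Type*} (r : Matrix ι (Fin 1) ℝ) :
    intervalMat 0 r = boxV r := by
  ext y
  simp [intervalMat, boxV]

lemma boxV_zero {ι : Type*} : boxV (0 : Matrix ι (Fin 1) ℝ) = 0 := by
  ext y
  simp only [boxV, Set.mem_setOf_eq, Matrix.zero_apply, Set.mem_zero]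
  constructor
  · intro h
    exact Matrix.ext fun i j => abs_nonpos_iff.mp (h i j)
  · rintro rfl i j
    simp

lemma real_clamp {a b y : ℝ} (ha : 0 ≤ a) (hb : 0 ≤ b) (h : |y| ≤ a + b) :
    |max (-a) (min a y)| ≤ a ∧ |y - max (-a) (min a y)| ≤ b := by
  rcases abs_le.mp h with ⟨h1, h2⟩
  constructor
  · rw [abs_le]
    exact ⟨le_max_left _ _, max_le (by linarith) (min_le_left _ _)⟩
  · rw [abs_le]
    rcases le_total y a with hy | hy
    · rcases le_total (-a) y with hz | hz
      · rw [min_eq_right hy, max_eq_right hz]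
        constructor <;> linarith
      · rw [min_eq_right hy, max_eq_left hz]
        constructor <;> linarith
    · rw [min_eq_left hy, max_eq_right (by linarith : -a ≤ a)]
      constructor <;> linarith

lemma boxV_add_boxV {ι : Type*} {a b : Matrix ι (Fin 1) ℝ}
    (ha : ∀ i j, 0 ≤ a i j) (hb : ∀ i j, 0 ≤ b i j) :
    boxV a + boxV b = boxV (a + b) := by
  ext y
  rw [Set.mem_add]
  constructor
  · rintro ⟨y1, hy1, y2, hy2, rfl⟩
    intro i j
    calc |(y1 + y2) i j| = |y1 i j + y2 i j| := by rw [Matrix.add_apply]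
      _ ≤ |y1 i j| + |y2 i j| := abs_add_le _ _
      _ ≤ a i j + b i j := add_le_add (hy1 i j) (hy2 i j)
      _ = (a + b) i j := (Matrix.add_apply _ _ _ _).symm
  · intro hy
    refine ⟨Matrix.of fun i j => max (-(a i j)) (min (a i j) (y i j)), ?_,
      y - Matrix.of fun i j => max (-(a i j)) (min (a i j) (y i j)), ?_, by abel⟩
    · intro i j
      exact (real_clamp (ha i j) (hb i j) (by simpa [Matrix.add_apply] using hy i j)).1
    · intro i j
      have := (real_clamp (ha i j) (hb i j) (by simpa [Matrix.add_apply] using hy i j)).2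
      simpa [Matrix.sub_apply] using this

lemma boxV_sum {ι : Type*} (r : ℕ → Matrix ι (Fin 1) ℝ) (k : ℕ)
    (hr : ∀ t i j, 0 ≤ r t i j) :
    ∑ t ∈ Finset.range k, boxV (r t) = boxV (∑ t ∈ Finset.range k, r t) := by
  induction k with
  | zero => simp [boxV_zero]
  | succ k ih =>
    rw [Finset.sum_range_succ, Finset.sum_range_succ, ih,
      boxV_add_boxV (fun i j => by rw [Matrix.sum_apply]; exact Finset.sum_nonneg fun t _ => hr t i j) (hr k)]

lemma image_mul_interval {ι κ : Type*} [Fintype ι] [Fintype κ]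
    (R : Matrix ι κ ℝ) (hR : ∀ i j, 0 ≤ R i j) (u : Matrix κ (Fin 1) ℝ) :
    (fun D => D * u) '' intervalMat 0 R = boxV (R * matAbs u) := by
  ext y
  constructor
  · rintro ⟨D, hD, rfl⟩ i j
    show |(D * u) i j| ≤ (R * matAbs u) i j
    rw [Matrix.mul_apply, Matrix.mul_apply]
    refine (Finset.abs_sum_le_sum_abs _ _).trans (Finset.sum_le_sum fun k _ => ?_)
    rw [abs_mul]
    have hDk := hD i k
    rw [Matrix.zero_apply, sub_zero] at hDk
    exact mul_le_mul_of_nonneg_right hDk (abs_nonneg _)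
  · intro hy
    classical
    have hsnn : ∀ i, 0 ≤ (R * matAbs u) i 0 := fun i =>
      entry_mul_nonneg hR (fun a b => abs_nonneg _) i 0
    refine ⟨Matrix.of fun i k => if (R * matAbs u) i 0 = 0 then 0 else
      (y i 0 / (R * matAbs u) i 0) * R i k * (if 0 ≤ u k 0 then 1 else -1), ?_, ?_⟩
    · intro i k
      simp only [Matrix.of_apply, Matrix.zero_apply, sub_zero]
      by_cases hsi : (R * matAbs u) i 0 = 0
      · rw [if_pos hsi]
        simpa using hR i k
      · rw [if_neg hsi]
        have h1 : |y i 0 / (R * matAbs u) i 0| ≤ 1 := by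
          rw [abs_div, abs_of_nonneg (hsnn i)]
          exact div_le_one_of_le₀ (hy i 0) (hsnn i)
        have h2 : |(if 0 ≤ u k 0 then (1:ℝ) else -1)| = 1 := by split <;> simp
        rw [abs_mul, abs_mul, h2, mul_one, abs_of_nonneg (hR i k)]
        calc |y i 0 / (R * matAbs u) i 0| * R i k ≤ 1 * R i k :=
              mul_le_mul_of_nonneg_right h1 (hR i k)
          _ = R i k := one_mul _
    · show _ * u = y
      ext i j
      have hj : j = 0 := Fin.eq_zero j
      subst hj
      rw [Matrix.mul_apply]
      simp only [Matrix.of_apply]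
      by_cases hsi : (R * matAbs u) i 0 = 0
      · have hy0 : y i 0 = 0 := abs_nonpos_iff.mp ((hy i 0).trans (le_of_eq hsi))
        rw [hy0]
        exact Finset.sum_eq_zero fun k _ => by rw [if_pos hsi, zero_mul]
      · have hterm : ∀ k ∈ (Finset.univ : Finset κ),
            (if (R * matAbs u) i 0 = 0 then 0 else
              (y i 0 / (R * matAbs u) i 0) * R i k * (if 0 ≤ u k 0 then 1 else -1)) * u k 0
              = (y i 0 / (R * matAbs u) i 0) * (R i k * |u k 0|) := by
          intro k _
          rw [if_neg hsi]
          by_cases h : 0 ≤ u k 0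
          · rw [if_pos h, abs_of_nonneg h]; ring
          · rw [if_neg h, abs_of_neg (lt_of_not_ge h)]; ring
        rw [Finset.sum_congr rfl hterm, ← Finset.mul_sum]
        have hsum : ∑ k, R i k * |u k 0| = (R * matAbs u) i 0 := by
          rw [Matrix.mul_apply]; rfl
        rw [hsum, div_mul_cancel₀ _ hsi]

/-- radius of `ℐ^Δ(k)` -/
def RD (AhK : Matrix (Fin n) (Fin n) ℝ) (FΔ : ℕ → Matrix (Fin n) (Fin n ⊕ Fin m) ℝ) (k : ℕ) :
    Matrix (Fin n) (Fin n ⊕ Fin m) ℝ :=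
  ∑ i ∈ Finset.range (k + 1), matAbs (AhK ^ (k - i)) * FΔ i

/-- radius of `ℐ^𝒲(k)` -/
def RWv (AhK : Matrix (Fin n) (Fin n) ℝ) (FW : ℕ → Matrix (Fin n) (Fin 1) ℝ) (k : ℕ) :
    Matrix (Fin n) (Fin 1) ℝ :=
  ∑ i ∈ Finset.range (k + 1), matAbs (AhK ^ (k - i)) * FW i

def DK (ΔS : Matrix (Fin n) (Fin n ⊕ Fin m) ℝ) (K : Matrix (Fin m) (Fin n) ℝ) :
    Matrix (Fin n) (Fin n) ℝ :=
  ΔS.submatrix id Sum.inl + ΔS.submatrix id Sum.inr * matAbs K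

def Jmat (K : Matrix (Fin m) (Fin n) ℝ) : Matrix (Fin n ⊕ Fin m) (Fin n) ℝ :=
  Matrix.fromRows 1 (matAbs K)

def Hv (AhK : Matrix (Fin n) (Fin n) ℝ) (FΔ : ℕ → Matrix (Fin n) (Fin n ⊕ Fin m) ℝ)
    (FW : ℕ → Matrix (Fin n) (Fin 1) ℝ) (u : Matrix (Fin n ⊕ Fin m) (Fin 1) ℝ) (j : ℕ) :
    Matrix (Fin n) (Fin 1) ℝ :=
  RD AhK FΔ j * u + RWv AhK FW j

def Lv (AhK : Matrix (Fin n) (Fin n) ℝ) (FΔ : ℕ → Matrix (Fin n) (Fin n ⊕ Fin m) ℝ)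
    (K : Matrix (Fin m) (Fin n) ℝ) (q : Matrix (Fin n) (Fin 1) ℝ) (j : ℕ) :
    Matrix (Fin n) (Fin 1) ℝ :=
  matAbs (AhK ^ j) * q +
    ∑ i ∈ Finset.range j, RD AhK FΔ (j - i - 1) * (Jmat K * (matAbs (AhK ^ i) * q))

lemma Lv_def (AhK : Matrix (Fin n) (Fin n) ℝ) (FΔ : ℕ → Matrix (Fin n) (Fin n ⊕ Fin m) ℝ)
    (K : Matrix (Fin m) (Fin n) ℝ) (q : Matrix (Fin n) (Fin 1) ℝ) (j : ℕ) :
    Lv AhK FΔ K q j = matAbs (AhK ^ j) * q +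
      ∑ i ∈ Finset.range j, RD AhK FΔ (j - i - 1) * (Jmat K * (matAbs (AhK ^ i) * q)) := rfl

lemma DS_mul_J (ΔS : Matrix (Fin n) (Fin n ⊕ Fin m) ℝ) (K : Matrix (Fin m) (Fin n) ℝ) :
    ΔS * Jmat K = DK ΔS K := by
  have h : ΔS = Matrix.fromCols (ΔS.submatrix id Sum.inl) (ΔS.submatrix id Sum.inr) := by
    ext i j
    cases j <;> simp [Matrix.fromCols]
  unfold Jmat DK
  conv_lhs => rw [h]
  rw [Matrix.fromCols_mul_fromRows, Matrix.mul_one]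

lemma DK_nonneg {ΔS : Matrix (Fin n) (Fin n ⊕ Fin m) ℝ} {K : Matrix (Fin m) (Fin n) ℝ}
    (hΔS : ∀ i j, 0 ≤ ΔS i j) : ∀ i j, 0 ≤ DK ΔS K i j := by
  intro i j
  unfold DK
  rw [Matrix.add_apply]
  exact add_nonneg (hΔS i (Sum.inl j))
    (entry_mul_nonneg (fun a b => hΔS a (Sum.inr b)) (matAbs_nonneg K) i j)

lemma Jmat_nonneg (K : Matrix (Fin m) (Fin n) ℝ) : ∀ i j, 0 ≤ Jmat K i j := by
  intro i j
  unfold Jmat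
  rcases i with i | i
  · rw [Matrix.fromRows_apply_inl]
    by_cases h : i = j <;> simp [Matrix.one_apply, h]
  · rw [Matrix.fromRows_apply_inr]
    exact matAbs_nonneg K i j

lemma FD_nonneg {AhK : Matrix (Fin n) (Fin n) ℝ} {FΔ : ℕ → Matrix (Fin n) (Fin n ⊕ Fin m) ℝ}
    {ΔS : Matrix (Fin n) (Fin n ⊕ Fin m) ℝ} {K : Matrix (Fin m) (Fin n) ℝ}
    (hΔS : ∀ i j, 0 ≤ ΔS i j) (hFΔ0 : FΔ 0 = ΔS)
    (hFΔ : ∀ j, FΔ (j + 1) = DK ΔS K * RD AhK FΔ j) :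
    ∀ j i c, 0 ≤ FΔ j i c := by
  intro j
  induction j using Nat.strong_induction_on with
  | _ j ih =>
    cases j with
    | zero => rw [hFΔ0]; exact hΔS
    | succ j =>
      rw [hFΔ j]
      intro i c
      refine entry_mul_nonneg (DK_nonneg hΔS) (fun a b => ?_) i c
      unfold RD
      rw [Matrix.sum_apply]
      exact Finset.sum_nonneg fun t ht =>
        entry_mul_nonneg (matAbs_nonneg _)
          (ih t (Nat.lt_succ_of_le (Nat.lt_succ_iff.mp (Finset.mem_range.mp ht)))) a b

lemma FW_nonneg' {AhK : Matrix (Fin n) (Fin n) ℝ} {FW : ℕ → Matrix (Fin n) (Fin 1) ℝ}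
    {ΔS : Matrix (Fin n) (Fin n ⊕ Fin m) ℝ} {K : Matrix (Fin m) (Fin n) ℝ} {wbar : Fin n → ℝ}
    (hΔS : ∀ i j, 0 ≤ ΔS i j) (hwbar : ∀ i, 0 ≤ wbar i) (hFW0 : FW 0 = colVec wbar)
    (hFW : ∀ j, FW (j + 1) = DK ΔS K * RWv AhK FW j) :
    ∀ j i c, 0 ≤ FW j i c := by
  intro j
  induction j using Nat.strong_induction_on with
  | _ j ih =>
    cases j with
    | zero => rw [hFW0]; intro i c; exact hwbar i
    | succ j =>
      rw [hFW j]
      intro i c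
      refine entry_mul_nonneg (DK_nonneg hΔS) (fun a b => ?_) i c
      unfold RWv
      rw [Matrix.sum_apply]
      exact Finset.sum_nonneg fun t ht =>
        entry_mul_nonneg (matAbs_nonneg _)
          (ih t (Nat.lt_succ_of_le (Nat.lt_succ_iff.mp (Finset.mem_range.mp ht)))) a b

lemma RD_nonneg {AhK : Matrix (Fin n) (Fin n) ℝ} {FΔ : ℕ → Matrix (Fin n) (Fin n ⊕ Fin m) ℝ}
    (hFD : ∀ j i c, 0 ≤ FΔ j i c) (k : ℕ) : ∀ i c, 0 ≤ RD AhK FΔ k i c := by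
  intro i c
  unfold RD
  rw [Matrix.sum_apply]
  exact Finset.sum_nonneg fun t _ => entry_mul_nonneg (matAbs_nonneg _) (hFD t) i c

lemma RWv_nonneg {AhK : Matrix (Fin n) (Fin n) ℝ} {FW : ℕ → Matrix (Fin n) (Fin 1) ℝ}
    (hFW : ∀ j i c, 0 ≤ FW j i c) (k : ℕ) : ∀ i c, 0 ≤ RWv AhK FW k i c := by
  intro i c
  unfold RWv
  rw [Matrix.sum_apply]
  exact Finset.sum_nonneg fun t _ => entry_mul_nonneg (matAbs_nonneg _) (hFW t) i c

lemma tube_eq_box (AhK : Matrix (Fin n) (Fin n) ℝ) (FΔ : ℕ → Matrix (Fin n) (Fin n ⊕ Fin m) ℝ)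
    (FW : ℕ → Matrix (Fin n) (Fin 1) ℝ)
    (z : ℕ → Matrix (Fin n) (Fin 1) ℝ) (v : ℕ → Matrix (Fin m) (Fin 1) ℝ)
    (hFD : ∀ j i c, 0 ≤ FΔ j i c) (hFWnn : ∀ j i c, 0 ≤ FW j i c) (j : ℕ) :
    Btube AhK FΔ FW z v j =
      boxV (∑ i ∈ Finset.range j, RD AhK FΔ (j - i - 1) * matAbs (Matrix.fromRows (z i) (v i))
            + ∑ i ∈ Finset.range j, RWv AhK FW i) := by
  unfold Btube
  have h1 : ∀ i ∈ Finset.range j,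
      (fun D => D * Matrix.fromRows (z i) (v i)) '' IDelta AhK FΔ (j - i - 1)
        = boxV (RD AhK FΔ (j - i - 1) * matAbs (Matrix.fromRows (z i) (v i))) := by
    intro i _
    exact image_mul_interval (RD AhK FΔ (j - i - 1)) (RD_nonneg hFD _) _
  have h2 : ∀ i ∈ Finset.range j, IWvec AhK FW i = boxV (RWv AhK FW i) := by
    intro i _
    exact interval_zero_eq_boxV (RWv AhK FW i)
  have h3 : ∀ (t : ℕ) (i : Fin n) (c : Fin 1),
      0 ≤ (RD AhK FΔ (j - t - 1) * matAbs (Matrix.fromRows (z t) (v t))) i c :=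
    fun t i c => entry_mul_nonneg (RD_nonneg hFD _) (matAbs_nonneg _) i c
  have h4 : ∀ (t : ℕ) (i : Fin n) (c : Fin 1), 0 ≤ RWv AhK FW t i c :=
    fun t => RWv_nonneg hFWnn t
  have h5 : ∀ (i : Fin n) (c : Fin 1),
      0 ≤ (∑ t ∈ Finset.range j, RD AhK FΔ (j - t - 1) * matAbs (Matrix.fromRows (z t) (v t))) i c := by
    intro i c
    rw [Matrix.sum_apply]
    exact Finset.sum_nonneg fun t _ => h3 t i c
  have h6 : ∀ (i : Fin n) (c : Fin 1), 0 ≤ (∑ t ∈ Finset.range j, RWv AhK FW t) i c := by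
    intro i c
    rw [Matrix.sum_apply]
    exact Finset.sum_nonneg fun t _ => h4 t i c
  rw [Finset.sum_congr rfl h1, Finset.sum_congr rfl h2,
    boxV_sum (fun t => RD AhK FΔ (j - t - 1) * matAbs (Matrix.fromRows (z t) (v t))) j h3,
    boxV_sum (fun t => RWv AhK FW t) j h4, boxV_add_boxV h5 h6]

lemma recH_eq (AhK : Matrix (Fin n) (Fin n) ℝ) (FΔ : ℕ → Matrix (Fin n) (Fin n ⊕ Fin m) ℝ)
    (FW : ℕ → Matrix (Fin n) (Fin 1) ℝ) (ΔS : Matrix (Fin n) (Fin n ⊕ Fin m) ℝ)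
    (K : Matrix (Fin m) (Fin n) ℝ)
    (hFΔ : ∀ j, FΔ (j + 1) = DK ΔS K * RD AhK FΔ j)
    (hFW : ∀ j, FW (j + 1) = DK ΔS K * RWv AhK FW j)
    (u : Matrix (Fin n ⊕ Fin m) (Fin 1) ℝ) (j : ℕ) :
    Hv AhK FΔ FW u j =
      matAbs (AhK ^ j) * (FΔ 0 * u + FW 0) +
        ∑ k ∈ Finset.range j, matAbs (AhK ^ (j - k - 1)) * (DK ΔS K * Hv AhK FΔ FW u k) := by
  unfold Hv RD RWv
  rw [Matrix.sum_mul, ← Finset.sum_add_distrib]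
  have h1 : ∀ i ∈ Finset.range (j + 1),
      matAbs (AhK ^ (j - i)) * FΔ i * u + matAbs (AhK ^ (j - i)) * FW i
        = matAbs (AhK ^ (j - i)) * (FΔ i * u + FW i) := by
    intro i _
    rw [Matrix.mul_add, Matrix.mul_assoc]
  rw [Finset.sum_congr rfl h1, Finset.sum_range_succ', Nat.sub_zero, add_comm]
  congr 1
  apply Finset.sum_congr rfl
  intro k hk
  have he : j - (k + 1) = j - k - 1 := by omega
  rw [he, hFΔ k, hFW k, Matrix.mul_assoc, ← Matrix.mul_add]
  rfl

lemma f_id (AhK : Matrix (Fin n) (Fin n) ℝ) (FΔ : ℕ → Matrix (Fin n) (Fin n ⊕ Fin m) ℝ)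
    (ΔS : Matrix (Fin n) (Fin n ⊕ Fin m) ℝ) (K : Matrix (Fin m) (Fin n) ℝ)
    (hFΔ0 : FΔ 0 = ΔS) (hFΔ : ∀ j, FΔ (j + 1) = DK ΔS K * RD AhK FΔ j)
    (q : Matrix (Fin n) (Fin 1) ℝ) (s : ℕ) :
    ∑ p ∈ Finset.range (s + 1), FΔ (s - p) * (Jmat K * (matAbs (AhK ^ p) * q))
      = DK ΔS K * Lv AhK FΔ K q s := by
  rw [Finset.sum_range_succ]
  have hlast : FΔ (s - s) * (Jmat K * (matAbs (AhK ^ s) * q))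
      = DK ΔS K * (matAbs (AhK ^ s) * q) := by
    rw [Nat.sub_self, hFΔ0, ← Matrix.mul_assoc, DS_mul_J]
  have hrest : ∀ p ∈ Finset.range s, FΔ (s - p) * (Jmat K * (matAbs (AhK ^ p) * q))
      = DK ΔS K * (RD AhK FΔ (s - p - 1) * (Jmat K * (matAbs (AhK ^ p) * q))) := by
    intro p hp
    have hsp : s - p = (s - p - 1) + 1 := by
      have := Finset.mem_range.mp hp; omega
    have h := hFΔ (s - p - 1)
    rw [← hsp] at h
    rw [h, Matrix.mul_assoc]
  rw [hlast, Finset.sum_congr rfl hrest, ← Matrix.mul_sum]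
  unfold Lv
  rw [Matrix.mul_add]
  exact add_comm _ _

lemma tri_swap {M : Type*} [AddCommMonoid M] (G : ℕ → ℕ → M) (j : ℕ) :
    ∑ i ∈ Finset.range j, ∑ l ∈ Finset.range (j - i), G i l
      = ∑ k ∈ Finset.range j, ∑ p ∈ Finset.range (k + 1), G p (k - p) := by
  induction j with
  | zero => simp
  | succ j ih =>
    rw [Finset.sum_range_succ (fun i => ∑ l ∈ Finset.range (j + 1 - i), G i l) j]
    have h1 : ∀ i ∈ Finset.range j, ∑ l ∈ Finset.range (j + 1 - i), G i l
        = ∑ l ∈ Finset.range (j - i), G i l + G i (j - i) := by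
      intro i hi
      have : j + 1 - i = (j - i) + 1 := by
        have := Finset.mem_range.mp hi; omega
      rw [this, Finset.sum_range_succ]
    rw [Finset.sum_congr rfl h1, Finset.sum_add_distrib, ih]
    have h2 : j + 1 - j = 1 := by omega
    rw [h2, Finset.sum_range_one]
    rw [Finset.sum_range_succ (fun k => ∑ p ∈ Finset.range (k + 1), G p (k - p)) j,
      Finset.sum_range_succ (fun p => G p (j - p)) j, Nat.sub_self]
    rw [add_assoc]

lemma recL_eq (AhK : Matrix (Fin n) (Fin n) ℝ) (FΔ : ℕ → Matrix (Fin n) (Fin n ⊕ Fin m) ℝ)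
    (ΔS : Matrix (Fin n) (Fin n ⊕ Fin m) ℝ) (K : Matrix (Fin m) (Fin n) ℝ)
    (hFΔ0 : FΔ 0 = ΔS) (hFΔ : ∀ j, FΔ (j + 1) = DK ΔS K * RD AhK FΔ j)
    (q : Matrix (Fin n) (Fin 1) ℝ) (j : ℕ) :
    Lv AhK FΔ K q j = matAbs (AhK ^ j) * q +
      ∑ k ∈ Finset.range j, matAbs (AhK ^ (j - k - 1)) * (DK ΔS K * Lv AhK FΔ K q k) := by
  conv_lhs => rw [Lv_def]
  congr 1
  have lhs_expand : ∀ i ∈ Finset.range j,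
      RD AhK FΔ (j - i - 1) * (Jmat K * (matAbs (AhK ^ i) * q))
        = ∑ l ∈ Finset.range (j - i),
            matAbs (AhK ^ (j - i - 1 - l)) * (FΔ l * (Jmat K * (matAbs (AhK ^ i) * q))) := by
    intro i hi
    have hr : j - i - 1 + 1 = j - i := by
      have := Finset.mem_range.mp hi; omega
    unfold RD
    rw [Matrix.sum_mul, hr]
    exact Finset.sum_congr rfl fun l _ => Matrix.mul_assoc _ _ _
  rw [Finset.sum_congr rfl lhs_expand,
    tri_swap (fun i l => matAbs (AhK ^ (j - i - 1 - l)) * (FΔ l * (Jmat K * (matAbs (AhK ^ i) * q)))) j]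
  apply Finset.sum_congr rfl
  intro k hk
  have hcong : ∀ p ∈ Finset.range (k + 1),
      matAbs (AhK ^ (j - p - 1 - (k - p))) * (FΔ (k - p) * (Jmat K * (matAbs (AhK ^ p) * q)))
        = matAbs (AhK ^ (j - k - 1)) * (FΔ (k - p) * (Jmat K * (matAbs (AhK ^ p) * q))) := by
    intro p hp
    have he : j - p - 1 - (k - p) = j - k - 1 := by
      have := Finset.mem_range.mp hp
      have := Finset.mem_range.mp hk
      omega
    rw [he]
  rw [Finset.sum_congr rfl hcong, ← Matrix.mul_sum, f_id AhK FΔ ΔS K hFΔ0 hFΔ q k]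

lemma key_le (AhK : Matrix (Fin n) (Fin n) ℝ) (FΔ : ℕ → Matrix (Fin n) (Fin n ⊕ Fin m) ℝ)
    (FW : ℕ → Matrix (Fin n) (Fin 1) ℝ) (ΔS : Matrix (Fin n) (Fin n ⊕ Fin m) ℝ)
    (K : Matrix (Fin m) (Fin n) ℝ) (u : Matrix (Fin n ⊕ Fin m) (Fin 1) ℝ)
    (hΔS : ∀ i j, 0 ≤ ΔS i j)
    (hFΔ0 : FΔ 0 = ΔS) (hFΔ : ∀ j, FΔ (j + 1) = DK ΔS K * RD AhK FΔ j)
    (hFW : ∀ j, FW (j + 1) = DK ΔS K * RWv AhK FW j)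
    (q : Matrix (Fin n) (Fin 1) ℝ) (hq : q = FΔ 0 * u + FW 0) :
    ∀ j i c, Lv AhK FΔ K q j i c ≤ Hv AhK FΔ FW u j i c := by
  intro j
  induction j using Nat.strong_induction_on with
  | _ j ih =>
    intro i c
    rw [recL_eq AhK FΔ ΔS K hFΔ0 hFΔ q j, recH_eq AhK FΔ FW ΔS K hFΔ hFW u j, ← hq,
      Matrix.add_apply, Matrix.add_apply]
    refine add_le_add_right ?_ _
    rw [Matrix.sum_apply, Matrix.sum_apply]
    refine Finset.sum_le_sum fun k hk => ?_
    refine entry_mul_mono (matAbs_nonneg _) (fun a b => ?_) i c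
    exact entry_mul_mono (DK_nonneg hΔS) (fun a' b' => ih k (Finset.mem_range.mp hk) a' b') a b

lemma Jmul_inl (K : Matrix (Fin m) (Fin n) ℝ) (V : Matrix (Fin n) (Fin 1) ℝ) (i : Fin n) (c : Fin 1) :
    (Jmat K * V) (Sum.inl i) c = V i c := by
  unfold Jmat
  rw [Matrix.fromRows_mul, Matrix.fromRows_apply_inl, Matrix.one_mul]

lemma Jmul_inr (K : Matrix (Fin m) (Fin n) ℝ) (V : Matrix (Fin n) (Fin 1) ℝ) (i : Fin m) (c : Fin 1) :
    (Jmat K * V) (Sum.inr i) c = (matAbs K * V) i c := by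
  unfold Jmat
  rw [Matrix.fromRows_mul, Matrix.fromRows_apply_inr]

lemma entry_mul_mono' {ι κ μ : Type*} [Fintype κ] {P P' : Matrix ι κ ℝ} {Q : Matrix κ μ ℝ}
    (hQ : ∀ i j, 0 ≤ Q i j) (h : ∀ i j, P i j ≤ P' i j) (i : ι) (j : μ) :
    (P * Q) i j ≤ (P' * Q) i j := by
  rw [Matrix.mul_apply, Matrix.mul_apply]
  exact Finset.sum_le_sum fun k _ => mul_le_mul_of_nonneg_right (h i k) (hQ k j)

lemma Btube_zero (AhK : Matrix (Fin n) (Fin n) ℝ) (FΔ : ℕ → Matrix (Fin n) (Fin n ⊕ Fin m) ℝ)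
    (FW : ℕ → Matrix (Fin n) (Fin 1) ℝ) (zz : ℕ → Matrix (Fin n) (Fin 1) ℝ)
    (vv : ℕ → Matrix (Fin m) (Fin 1) ℝ) :
    Btube AhK FΔ FW zz vv 0 = {(0 : Matrix (Fin n) (Fin 1) ℝ)} := by
  unfold Btube
  rw [Finset.range_zero, Finset.sum_empty, Finset.sum_empty, add_zero]
  rfl

lemma incl_core (AhK : Matrix (Fin n) (Fin n) ℝ) (K : Matrix (Fin m) (Fin n) ℝ)
    (ΔS : Matrix (Fin n) (Fin n ⊕ Fin m) ℝ) (wbar : Fin n → ℝ)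
    (FΔ : ℕ → Matrix (Fin n) (Fin n ⊕ Fin m) ℝ) (FW : ℕ → Matrix (Fin n) (Fin 1) ℝ)
    (hΔS : ∀ i j, 0 ≤ ΔS i j) (hwbar : ∀ i, 0 ≤ wbar i)
    (hFΔ0 : FΔ 0 = ΔS) (hFΔ : ∀ j, FΔ (j + 1) = DK ΔS K * RD AhK FΔ j)
    (hFW0 : FW 0 = colVec wbar) (hFW : ∀ j, FW (j + 1) = DK ΔS K * RWv AhK FW j)
    (z : ℕ → Matrix (Fin n) (Fin 1) ℝ) (v : ℕ → Matrix (Fin m) (Fin 1) ℝ)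
    (e : Matrix (Fin n) (Fin 1) ℝ)
    (he : ∀ i c, |e i c| ≤ (ΔS * matAbs (Matrix.fromRows (z 0) (v 0)) + colVec wbar) i c)
    (j : ℕ) :
    ∀ b ∈ Btube AhK FΔ FW (fun t => z (t + 1) + AhK ^ t * e)
        (fun t => v (t + 1) + K * (AhK ^ t * e)) j,
      AhK ^ j * e + b ∈ Btube AhK FΔ FW z v (j + 1) := by
  have hFDnn := FD_nonneg hΔS hFΔ0 hFΔ
  have hFWnn := FW_nonneg' hΔS hwbar hFW0 hFW
  set u : Matrix (Fin n ⊕ Fin m) (Fin 1) ℝ := matAbs (Matrix.fromRows (z 0) (v 0)) with hudef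
  set q : Matrix (Fin n) (Fin 1) ℝ := ΔS * u + colVec wbar with hqdef
  have hq : q = FΔ 0 * u + FW 0 := by rw [hqdef, hFΔ0, hFW0]
  have habs_e : ∀ i c, matAbs e i c ≤ q i c := he
  have habs_pow : ∀ (t : ℕ) (i : Fin n) (c : Fin 1),
      |(AhK ^ t * e) i c| ≤ (matAbs (AhK ^ t) * q) i c := fun t i c =>
    (entry_abs_mul _ _ i c).trans (entry_mul_mono (matAbs_nonneg _) habs_e i c)
  have hfr : ∀ (k : ℕ) (i' : Fin n ⊕ Fin m) (c : Fin 1),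
      matAbs (Matrix.fromRows (z (k + 1) + AhK ^ k * e) (v (k + 1) + K * (AhK ^ k * e))) i' c
        ≤ (matAbs (Matrix.fromRows (z (k + 1)) (v (k + 1)))
            + Jmat K * (matAbs (AhK ^ k) * q)) i' c := by
    intro k i' c
    rcases i' with i' | i'
    · have hJ := Jmul_inl K (matAbs (AhK ^ k) * q) i' c
      simp only [matAbs, Matrix.add_apply, Matrix.fromRows_apply_inl, hJ]
      exact (abs_add_le _ _).trans (add_le_add_right (habs_pow k i' c) _)
    · have hJ := Jmul_inr K (matAbs (AhK ^ k) * q) i' c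
      simp only [matAbs, Matrix.add_apply, Matrix.fromRows_apply_inr, hJ]
      have h2 : |(K * (AhK ^ k * e)) i' c| ≤ (matAbs K * (matAbs (AhK ^ k) * q)) i' c :=
        (entry_abs_mul K _ i' c).trans
          (entry_mul_mono (matAbs_nonneg K) (fun a b => habs_pow k a b) i' c)
      exact (abs_add_le _ _).trans (add_le_add_right h2 _)
  intro b hb
  rw [tube_eq_box AhK FΔ FW _ _ hFDnn hFWnn j] at hb
  have hb' : b ∈ boxV (∑ t ∈ Finset.range j, RD AhK FΔ (j - t - 1) *
      matAbs (Matrix.fromRows (z (t + 1) + AhK ^ t * e) (v (t + 1) + K * (AhK ^ t * e)))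
      + ∑ t ∈ Finset.range j, RWv AhK FW t) := hb
  rw [tube_eq_box AhK FΔ FW z v hFDnn hFWnn (j + 1)]
  have hp1 : ∑ t ∈ Finset.range (j + 1),
      RD AhK FΔ (j + 1 - t - 1) * matAbs (Matrix.fromRows (z t) (v t))
      = (∑ t ∈ Finset.range j,
          RD AhK FΔ (j - t - 1) * matAbs (Matrix.fromRows (z (t + 1)) (v (t + 1))))
        + RD AhK FΔ j * u := by
    rw [Finset.sum_range_succ']
    have hA : ∀ t ∈ Finset.range j,
        RD AhK FΔ (j + 1 - (t + 1) - 1) * matAbs (Matrix.fromRows (z (t + 1)) (v (t + 1)))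
          = RD AhK FΔ (j - t - 1) * matAbs (Matrix.fromRows (z (t + 1)) (v (t + 1))) := by
      intro t ht
      have hee : j + 1 - (t + 1) - 1 = j - t - 1 := by omega
      rw [hee]
    rw [Finset.sum_congr rfl hA]
    try rfl
  rw [hp1, Finset.sum_range_succ]
  intro i c
  have h3 := hb' i c
  rw [Matrix.add_apply, Matrix.sum_apply, Matrix.sum_apply] at h3
  have h4 : ∑ t ∈ Finset.range j, (RD AhK FΔ (j - t - 1) *
        matAbs (Matrix.fromRows (z (t + 1) + AhK ^ t * e)
          (v (t + 1) + K * (AhK ^ t * e)))) i c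
      ≤ ∑ t ∈ Finset.range j, ((RD AhK FΔ (j - t - 1) *
          matAbs (Matrix.fromRows (z (t + 1)) (v (t + 1)))) i c
        + (RD AhK FΔ (j - t - 1) * (Jmat K * (matAbs (AhK ^ t) * q))) i c) := by
    refine Finset.sum_le_sum fun t ht => ?_
    refine (entry_mul_mono (RD_nonneg hFDnn _) (hfr t) i c).trans (le_of_eq ?_)
    rw [Matrix.mul_add, Matrix.add_apply]
  rw [Finset.sum_add_distrib] at h4
  have h5 : (matAbs (AhK ^ j) * q) i c
      + ∑ t ∈ Finset.range j, (RD AhK FΔ (j - t - 1) * (Jmat K * (matAbs (AhK ^ t) * q))) i c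
      = Lv AhK FΔ K q j i c := by
    rw [Lv_def, Matrix.add_apply, Matrix.sum_apply]
  have h6 := key_le AhK FΔ FW ΔS K u hΔS hFΔ0 hFΔ hFW q hq j i c
  have h7 : Hv AhK FΔ FW u j i c = (RD AhK FΔ j * u) i c + RWv AhK FW j i c := rfl
  have hstart : |(AhK ^ j * e) i c + b i c| ≤ |(AhK ^ j * e) i c| + |b i c| := abs_add_le _ _
  have h2 := habs_pow j i c
  show |(AhK ^ j * e + b) i c| ≤ _
  simp only [Matrix.add_apply, Matrix.sum_apply]
  linarith [hstart, h2, h3, h4, h5, h6, h7]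

end Aux

/-- Theorem 1, recursive feasibility. -/
theorem stmt15 {n m : ℕ}
    (Ah : Matrix (Fin n) (Fin n) ℝ) (Bh : Matrix (Fin n) (Fin m) ℝ)
    (K : Matrix (Fin m) (Fin n) ℝ)
    (ΔS : Matrix (Fin n) (Fin n ⊕ Fin m) ℝ) (hΔS : ∀ i j, 0 ≤ ΔS i j)
    (wbar : Fin n → ℝ) (hwbar : ∀ i, 0 ≤ wbar i)
    (FΔ : ℕ → Matrix (Fin n) (Fin n ⊕ Fin m) ℝ) (hFΔ0 : FΔ 0 = ΔS)
    (hFΔ : ∀ j, FΔ (j + 1) =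
      (ΔS.submatrix id Sum.inl + ΔS.submatrix id Sum.inr * matAbs K) *
        ∑ i ∈ Finset.range (j + 1), matAbs ((Ah + Bh * K) ^ (j - i)) * FΔ i)
    (FW : ℕ → Matrix (Fin n) (Fin 1) ℝ) (hFW0 : FW 0 = colVec wbar)
    (hFW : ∀ j, FW (j + 1) =
      (ΔS.submatrix id Sum.inl + ΔS.submatrix id Sum.inr * matAbs K) *
        ∑ i ∈ Finset.range (j + 1), matAbs ((Ah + Bh * K) ^ (j - i)) * FW i)
    (X : Set (Matrix (Fin n) (Fin 1) ℝ)) (U : Set (Matrix (Fin m) (Fin 1) ℝ))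
    (Xf : Set (Matrix (Fin n) (Fin 1) ℝ))
    (hXfX : Xf ⊆ X) (hKXf : (fun x => K * x) '' Xf ⊆ U)
    (hRPI : ∀ x ∈ Xf, ∀ Am ∈ AKset (Ah + Bh * K) K ΔS,
      ∀ w ∈ intervalMat 0 (colVec wbar), Am * x + w ∈ Xf)
    (x : Matrix (Fin n) (Fin 1) ℝ) (N : ℕ)
    (z : ℕ → Matrix (Fin n) (Fin 1) ℝ) (v : ℕ → Matrix (Fin m) (Fin 1) ℝ)
    (hfeas : Feasible Ah Bh K FΔ FW X U Xf x N z v) :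
    ∀ (A : Matrix (Fin n) (Fin n) ℝ) (B : Matrix (Fin n) (Fin m) ℝ),
      (∀ i j, |Matrix.fromCols A B i j - Matrix.fromCols Ah Bh i j| ≤ ΔS i j) →
      ∀ w ∈ intervalMat 0 (colVec wbar),
        ∃ (N' : ℕ) (z' : ℕ → Matrix (Fin n) (Fin 1) ℝ) (v' : ℕ → Matrix (Fin m) (Fin 1) ℝ),
          Feasible Ah Bh K FΔ FW X U Xf (A * x + B * v 0 + w) N' z' v' := by
  obtain ⟨hN1, hz0, hdyn, hstate, hinput, hterm⟩ := hfeas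
  intro A B hAB w hw
  have hFΔ' : ∀ j, FΔ (j + 1) = DK ΔS K * RD (Ah + Bh * K) FΔ j := hFΔ
  have hFW' : ∀ j, FW (j + 1) = DK ΔS K * RWv (Ah + Bh * K) FW j := hFW
  have hFDnn := FD_nonneg hΔS hFΔ0 hFΔ'
  have hFWnn := FW_nonneg' hΔS hwbar hFW0 hFW'
  set e : Matrix (Fin n) (Fin 1) ℝ :=
    Matrix.fromCols (A - Ah) (B - Bh) * Matrix.fromRows (z 0) (v 0) + w with hedef
  have hDle : ∀ i t, |Matrix.fromCols (A - Ah) (B - Bh) i t| ≤ ΔS i t := by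
    intro i t
    have h := hAB i t
    have heq : Matrix.fromCols A B i t - Matrix.fromCols Ah Bh i t
        = Matrix.fromCols (A - Ah) (B - Bh) i t := by
      rcases t with t | t <;> simp [Matrix.fromCols, Matrix.sub_apply]
    rwa [heq] at h
  have he : ∀ i c, |e i c| ≤ (ΔS * matAbs (Matrix.fromRows (z 0) (v 0)) + colVec wbar) i c := by
    intro i c
    rw [hedef, Matrix.add_apply, Matrix.add_apply]
    refine (abs_add_le _ _).trans (add_le_add ?_ ?_)
    · exact (entry_abs_mul _ _ i c).trans
        (entry_mul_mono' (matAbs_nonneg _) (fun a b => hDle a b) i c)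
    · have hwi := hw i c
      rw [Matrix.zero_apply, sub_zero] at hwi
      exact hwi
  have hz1 : z 1 = Ah * z 0 + Bh * v 0 := hdyn 0 hN1
  have hplus : A * x + B * v 0 + w = z 1 + e := by
    rw [hz1, hedef, Matrix.fromCols_mul_fromRows, hz0, Matrix.sub_mul, Matrix.sub_mul]
    abel
  rcases Nat.lt_or_ge N 2 with hN | hN
  · -- case N = 1 : use the terminal set
    have hN1' : N = 1 := by omega
    subst hN1'
    set y := A * x + B * v 0 + w with hydef
    have hRD0 : RD (Ah + Bh * K) FΔ (1 - 0 - 1) = ΔS := by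
      show RD (Ah + Bh * K) FΔ 0 = ΔS
      unfold RD
      rw [Finset.sum_range_one, Nat.sub_zero, pow_zero, matAbs_one', Matrix.one_mul, hFΔ0]
    have hRW0 : RWv (Ah + Bh * K) FW 0 = colVec wbar := by
      unfold RWv
      rw [Finset.sum_range_one, Nat.sub_zero, pow_zero, matAbs_one', Matrix.one_mul, hFW0]
    have heB : e ∈ Btube (Ah + Bh * K) FΔ FW z v 1 := by
      rw [tube_eq_box (Ah + Bh * K) FΔ FW z v hFDnn hFWnn 1,
        Finset.sum_range_one, Finset.sum_range_one, hRD0, hRW0]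
      exact he
    have hxf : y ∈ Xf := by
      rw [hplus]
      exact hterm (Set.mem_add.mpr ⟨z 1, Set.mem_singleton _, e, heB, rfl⟩)
    have hsub1 : {(fun t => if t = 0 then y else (Ah + Bh * K) * y) 1} +
        Btube (Ah + Bh * K) FΔ FW (fun t => if t = 0 then y else (Ah + Bh * K) * y)
          (fun _ => K * y) 1 ⊆ Xf := by
      intro p hp
      rw [Set.mem_add] at hp
      obtain ⟨a, ha, b, hb, rfl⟩ := hp
      rw [Set.mem_singleton_iff] at ha
      subst ha
      rw [tube_eq_box (Ah + Bh * K) FΔ FW _ _ hFDnn hFWnn 1,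
        Finset.sum_range_one, Finset.sum_range_one, hRD0, hRW0] at hb
      have hb2 : b ∈ boxV (ΔS * matAbs (Matrix.fromRows y (K * y)) + colVec wbar) := hb
      have hAnn : ∀ (i : Fin n) (c : Fin 1),
          0 ≤ (ΔS * matAbs (Matrix.fromRows y (K * y))) i c :=
        fun i c => entry_mul_nonneg hΔS (matAbs_nonneg _) i c
      have hBnn : ∀ (i : Fin n) (c : Fin 1), 0 ≤ colVec wbar i c := fun i c => hwbar i
      rw [← boxV_add_boxV hAnn hBnn] at hb2
      rw [Set.mem_add] at hb2
      obtain ⟨b1, hb1, b2, hb2', rfl⟩ := hb2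
      rw [← image_mul_interval ΔS hΔS (Matrix.fromRows y (K * y))] at hb1
      obtain ⟨D', hD', rfl⟩ := hb1
      have hb2w : b2 ∈ intervalMat 0 (colVec wbar) := by
        rw [interval_zero_eq_boxV]
        exact hb2'
      have hAm : (Ah + Bh * K) + D' * Matrix.fromRows 1 K ∈ AKset (Ah + Bh * K) K ΔS :=
        ⟨D', hD', rfl⟩
      have hres := hRPI y hxf _ hAm b2 hb2w
      have hEq : (fun t => if t = 0 then y else (Ah + Bh * K) * y) 1 +
          (D' * Matrix.fromRows y (K * y) + b2)
          = ((Ah + Bh * K) + D' * Matrix.fromRows 1 K) * y + b2 := by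
        show (Ah + Bh * K) * y + (D' * Matrix.fromRows y (K * y) + b2) = _
        have hfr' : Matrix.fromRows y (K * y)
            = Matrix.fromRows (1 : Matrix (Fin n) (Fin n) ℝ) K * y := by
          rw [Matrix.fromRows_mul, Matrix.one_mul]
        rw [hfr']
        change _ = (Ah + Bh * K + D' * Matrix.fromRows (1 : Matrix (Fin n) (Fin n) ℝ) K) * y + b2
        conv_rhs => rw [Matrix.add_mul, Matrix.mul_assoc]
        exact (add_assoc _ _ _).symm
      rw [hEq]
      exact hres
    refine ⟨1, fun t => if t = 0 then y else (Ah + Bh * K) * y, fun _ => K * y,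
      le_refl 1, if_pos rfl, ?_, ?_, ?_, ?_⟩
    · -- dynamics
      intro j hj
      interval_cases j
      show (if (0 + 1 : ℕ) = 0 then y else (Ah + Bh * K) * y)
          = Ah * (if (0 : ℕ) = 0 then y else (Ah + Bh * K) * y) + Bh * (K * y)
      rw [if_neg (by omega : ¬(0 + 1 = 0)), if_pos rfl, Matrix.add_mul, Matrix.mul_assoc]
    · -- state constraints
      intro j hj
      interval_cases j
      · intro p hp
        rw [Btube_zero, Set.singleton_add_singleton, add_zero,
          Set.mem_singleton_iff] at hp
        subst hp
        exact hXfX hxf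
      · exact fun p hp => hXfX (hsub1 hp)
    · -- input constraints
      intro j hj
      interval_cases j
      intro p hp
      rw [Btube_zero, Set.image_singleton, Set.singleton_add_singleton,
        Set.mem_singleton_iff] at hp
      subst hp
      show K * y + K * (0 : Matrix (Fin n) (Fin 1) ℝ) ∈ U
      rw [Matrix.mul_zero, add_zero]
      exact hKXf ⟨y, hxf, rfl⟩
    · -- terminal constraint
      exact hsub1
  · -- case N ≥ 2 : shift the sequences
    have hcore : ∀ j, ∀ b ∈ Btube (Ah + Bh * K) FΔ FW
        (fun t => z (t + 1) + (Ah + Bh * K) ^ t * e)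
        (fun t => v (t + 1) + K * ((Ah + Bh * K) ^ t * e)) j,
        (Ah + Bh * K) ^ j * e + b ∈ Btube (Ah + Bh * K) FΔ FW z v (j + 1) :=
      fun j => incl_core (Ah + Bh * K) K ΔS wbar FΔ FW hΔS hwbar hFΔ0 hFΔ' hFW0 hFW' z v e he j
    have hIncl : ∀ (j : ℕ) (p : Matrix (Fin n) (Fin 1) ℝ),
        p ∈ {(fun t => z (t + 1) + (Ah + Bh * K) ^ t * e) j} +
          Btube (Ah + Bh * K) FΔ FW (fun t => z (t + 1) + (Ah + Bh * K) ^ t * e)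
            (fun t => v (t + 1) + K * ((Ah + Bh * K) ^ t * e)) j →
        p ∈ {z (j + 1)} + Btube (Ah + Bh * K) FΔ FW z v (j + 1) := by
      intro j p hp
      rw [Set.mem_add] at hp ⊢
      obtain ⟨a, ha, b, hb, rfl⟩ := hp
      rw [Set.mem_singleton_iff] at ha
      subst ha
      refine ⟨z (j + 1), Set.mem_singleton _, (Ah + Bh * K) ^ j * e + b, hcore j b hb, ?_⟩
      show z (j + 1) + ((Ah + Bh * K) ^ j * e + b) = z (j + 1) + (Ah + Bh * K) ^ j * e + b
      exact (add_assoc _ _ _).symm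
    refine ⟨N - 1, fun t => z (t + 1) + (Ah + Bh * K) ^ t * e,
      fun t => v (t + 1) + K * ((Ah + Bh * K) ^ t * e), by omega, ?_, ?_, ?_, ?_, ?_⟩
    · -- initial condition
      show z (0 + 1) + (Ah + Bh * K) ^ 0 * e = A * x + B * v 0 + w
      rw [hplus, pow_zero, Matrix.one_mul]
    · -- dynamics
      intro j hj
      have hpow : (Ah + Bh * K) ^ (j + 1) * e
          = Ah * ((Ah + Bh * K) ^ j * e) + Bh * (K * ((Ah + Bh * K) ^ j * e)) := by
        rw [pow_succ', Matrix.mul_assoc, Matrix.add_mul, Matrix.mul_assoc]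
      show z (j + 1 + 1) + (Ah + Bh * K) ^ (j + 1) * e
          = Ah * (z (j + 1) + (Ah + Bh * K) ^ j * e)
            + Bh * (v (j + 1) + K * ((Ah + Bh * K) ^ j * e))
      rw [hdyn (j + 1) (by omega), hpow,
        Matrix.mul_add Ah (z (j + 1)) ((Ah + Bh * K) ^ j * e),
        Matrix.mul_add Bh (v (j + 1)) (K * ((Ah + Bh * K) ^ j * e)),
        add_add_add_comm]
    · -- state constraints
      intro j hj
      intro p hp
      exact hstate (j + 1) (by omega) (hIncl j p hp)
    · -- input constraints
      intro j hj
      intro p hp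
      rw [Set.mem_add] at hp
      obtain ⟨a, ha, b', hb', rfl⟩ := hp
      rw [Set.mem_singleton_iff] at ha
      subst ha
      obtain ⟨b, hbB, rfl⟩ := hb'
      refine hinput (j + 1) (by omega) ?_
      rw [Set.mem_add]
      refine ⟨v (j + 1), Set.mem_singleton _, K * ((Ah + Bh * K) ^ j * e + b),
        ⟨(Ah + Bh * K) ^ j * e + b, hcore j b hbB, rfl⟩, ?_⟩
      show v (j + 1) + K * ((Ah + Bh * K) ^ j * e + b)
          = v (j + 1) + K * ((Ah + Bh * K) ^ j * e) + K * b
      rw [Matrix.mul_add]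
      exact (add_assoc _ _ _).symm
    · -- terminal constraint
      intro p hp
      have hmem := hIncl (N - 1) p hp
      have hNN : N - 1 + 1 = N := by omega
      rw [hNN] at hmem
      exact hterm hmem
end
end
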